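/- Let V be a vector space over 𝔽₂ of finite positive dimension endowed with a symplectic form B whose radical is zero, let I be a basis of V, let T be a tree whose line graph is G(I) (via an identification of I with the edges of T), and let u, v be distinct vertices of T. Suppose β, γ ∈ V satisfy: for all α ∈ I, B(α,β) = 1 iff u is incident to α, and B(α,γ) = 1 iff v is incident to α. If α₁,…,α_k are the edges of the path in T joining u and v, then β + γ = α₁ + ⋯ + α_k, and consequently B(β,γ) = 1. -/

import Mathlib

open Module

/-- The transvection with direction `α`, as a linear automorphism of `V`
(over `𝔽₂`, for an alternating form `B` it is an involution). -/
def transvection {V : Type} [AddCommGroup V] [Module (ZMod 2) V]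
    (B : LinearMap.BilinForm (ZMod 2) V) (hB : ∀ v, B v v = 0) (α : V) :
    V ≃ₗ[ZMod 2] V :=
  letI f : V →ₗ[ZMod 2] V :=
    { toFun := fun β => β + B β α • α
      map_add' := fun β γ => by
        simp only [map_add, LinearMap.add_apply, add_smul]
        abel
      map_smul' := fun c β => by
        simp only [map_smul, LinearMap.smul_apply, smul_eq_mul, RingHom.id_apply, smul_add,
          smul_smul] }
  haveI key : ∀ β, f (f β) = β := by
    intro β
    show (β + B β α • α) + B (β + B β α • α) α • α = β
    have h1 : B (β + B β α • α) α = B β α := by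
      simp [map_add, hB α, LinearMap.add_apply, LinearMap.smul_apply]
    rw [h1]
    have h2 : B β α • α + B β α • α = (0 : V) := by
      rw [← add_smul]
      have : B β α + B β α = 0 := by
        have : (2 : ZMod 2) = 0 := by decide
        calc B β α + B β α = 2 * B β α := by ring
        _ = 0 := by rw [this]; ring
      rw [this, zero_smul]
    rw [add_assoc, h2, add_zero]
  LinearEquiv.ofLinear f f (by ext β; exact key β) (by ext β; exact key β)

/-- the subgroup `Tv(S)` generated by the transvections with directions in `S`. -/
def Tv {V : Type} [AddCommGroup V] [Module (ZMod 2) V]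
    (B : LinearMap.BilinForm (ZMod 2) V) (hB : ∀ v, B v v = 0) (S : Set V) :
    Subgroup (V ≃ₗ[ZMod 2] V) :=
  Subgroup.closure ((fun α => transvection B hB α) '' S)

/-- The graph `G(S)`: vertex set `S`, with `α, β` adjacent iff `B α β = 1`. -/
def graphOf {V : Type} [AddCommGroup V] [Module (ZMod 2) V]
    (B : LinearMap.BilinForm (ZMod 2) V) (hB : ∀ v, B v v = 0) (S : Set V) :
    SimpleGraph S where
  Adj a b := B a b = 1
  symm := by
    constructor
    beta_reduce
    intro a b hab
    have h := hB ((a : V) + b)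
    simp only [map_add, LinearMap.add_apply, hB] at h
    -- h : B b a + B a b = 0 (after simp of diagonal terms)
    have h' : B (b : V) a + B (a : V) b = 0 := by
      simpa [hB] using h
    have : B (b : V) a = B (a : V) b := by
      have := eq_neg_of_add_eq_zero_left h'
      rwa [CharTwo.neg_eq] at this
    rw [this]; exact hab
  loopless := by
    constructor
    beta_reduce
    intro a h
    rw [hB] at h
    exact zero_ne_one h

/-- number of connected components of a graph. -/
noncomputable def numComponents {α : Type} (G : SimpleGraph α) : ℕ :=
  Nat.card G.ConnectedComponent

/-- A cut-vertex: a vertex whose deletion increases the number of components. -/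
noncomputable def IsCutVertex {α : Type} (G : SimpleGraph α) (u : α) : Prop :=
  numComponents G < numComponents (G.induce {v | v ≠ u})

/-- A block: a maximal (vertex set of a) connected induced subgraph having no cut-vertex. -/
noncomputable def IsBlock {α : Type} (G : SimpleGraph α) (A : Set α) : Prop :=
  ((G.induce A).Connected ∧ ∀ u, ¬ IsCutVertex (G.induce A) u) ∧
    ∀ A' : Set α, A ⊆ A' → ((G.induce A').Connected ∧ ∀ u, ¬ IsCutVertex (G.induce A') u) →
      A' = A

/-- A block graph: a connected graph all of whose blocks are complete. -/
noncomputable def IsBlockGraph {α : Type} (G : SimpleGraph α) : Prop :=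
  G.Connected ∧ ∀ A : Set α, IsBlock G A → A.Pairwise G.Adj

/-- Claw-free: no induced subgraph isomorphic to `K_{1,3}`. -/
def ClawFree {α : Type} (G : SimpleGraph α) : Prop :=
  IsEmpty (completeBipartiteGraph (Fin 1) (Fin 3) ↪g G)

/-- `G` is (isomorphic to) the line graph of a tree. -/
def IsLineGraphOfTree {α : Type} (G : SimpleGraph α) : Prop :=
  ∃ (W : Type) (T : SimpleGraph W), T.IsTree ∧ Nonempty (G ≃g T.lineGraph)

/-- A path graph: a tree in which every vertex has degree at most two. -/
def IsPathGraph {α : Type} (G : SimpleGraph α) : Prop :=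
  G.IsTree ∧ ∀ v a b c : α, G.Adj v a → G.Adj v b → G.Adj v c → a = b ∨ a = c ∨ b = c

/-- The relation `𝓘₀` on linearly independent subsets of `V`. -/
def IRelZero {V : Type} [AddCommGroup V] [Module (ZMod 2) V]
    (B : LinearMap.BilinForm (ZMod 2) V) (hB : ∀ v, B v v = 0) (S S' : Set V) : Prop :=
  LinearIndependent (ZMod 2) ((↑) : S → V) ∧ LinearIndependent (ZMod 2) ((↑) : S' → V) ∧
    ∃ α ∈ S, ∃ β ∈ S, S' = insert (transvection B hB α β) (S \ {β})

/-- The equivalence relation `𝓘` generated by `𝓘₀`. -/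
def IRel {V : Type} [AddCommGroup V] [Module (ZMod 2) V]
    (B : LinearMap.BilinForm (ZMod 2) V) (hB : ∀ v, B v v = 0) : Set V → Set V → Prop :=
  Relation.EqvGen (IRelZero B hB)

open scoped Classical

/-- indicator of vertex membership in an edge, valued in `ZMod 2`. -/
noncomputable def indZ {W : Type} (x : W) (f : Sym2 W) : ZMod 2 :=
  if x ∈ f then 1 else 0

lemma zmod2_eq_zero_of_ne_one : ∀ a : ZMod 2, a ≠ 1 → a = 0 := by decide

lemma Bsymm {V : Type} [AddCommGroup V] [Module (ZMod 2) V]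
    (B : LinearMap.BilinForm (ZMod 2) V) (hB : ∀ v, B v v = 0) (x y : V) :
    B x y = B y x := by
  have h := hB (x + y)
  simp only [map_add, LinearMap.add_apply, hB, zero_add, add_zero] at h
  have h2 := eq_neg_of_add_eq_zero_left h
  rw [CharTwo.neg_eq] at h2
  exact h2.symm

lemma filter_cons_eq {V W : Type} [AddCommGroup V] [Module (ZMod 2) V]
    {I : Set V} [Fintype I] {T : SimpleGraph W} (e : I ≃ T.edgeSet)
    {a b y : W} (h : T.Adj a b) (q : T.Walk b y) :
    (Finset.univ.filter
        (fun α' : I => (e α' : Sym2 W) ∈ (SimpleGraph.Walk.cons h q).edges))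
      = insert (e.symm ⟨s(a, b), h⟩)
          (Finset.univ.filter (fun α' : I => (e α' : Sym2 W) ∈ q.edges)) := by
  ext α'
  simp only [SimpleGraph.Walk.edges_cons, List.mem_cons, Finset.mem_filter,
    Finset.mem_insert, Finset.mem_univ, true_and]
  constructor
  · rintro (h1 | h2)
    · exact Or.inl (e.eq_symm_apply.mpr (Subtype.ext h1))
    · exact Or.inr h2
  · rintro (h1 | h2)
    · left
      have : e α' = ⟨s(a, b), h⟩ := e.eq_symm_apply.mp h1
      exact congrArg Subtype.val this
    · exact Or.inr h2

/-- Main induction: the pairing of `α` with the sum of the basis vectors along a path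
equals the sum of indicators of the endpoints. -/
lemma pathSum {V W : Type} [AddCommGroup V] [Module (ZMod 2) V]
    (B : LinearMap.BilinForm (ZMod 2) V) (hB : ∀ v, B v v = 0)
    {I : Set V} [Fintype I] {T : SimpleGraph W} (e : I ≃ T.edgeSet)
    (he : ∀ a b : I, a ≠ b →
      ((B (a : V) (b : V) = 1) ↔ ∃ u : W, u ∈ (e a : Sym2 W) ∧ u ∈ (e b : Sym2 W)))
    {x y : W} (p : T.Walk x y) (α : I) :
    p.IsPath →
    (∑ α' ∈ Finset.univ.filter (fun α' : I => (e α' : Sym2 W) ∈ p.edges),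
      B (α : V) (α' : V)) = indZ x (e α) + indZ y (e α) := by
  induction p with
  | nil =>
    intro _
    simp only [SimpleGraph.Walk.edges_nil, List.not_mem_nil, Finset.filter_false,
      Finset.sum_empty]
    unfold indZ
    split_ifs <;> decide
  | @cons a b c h q ih =>
    intro hp
    have hq : q.IsPath := hp.of_cons
    have hnodup := hp.edges_nodup
    rw [SimpleGraph.Walk.edges_cons] at hnodup
    have hnotedge : s(a, b) ∉ q.edges := (List.nodup_cons.mp hnodup).1
    set α₀ : I := e.symm ⟨s(a, b), h⟩ with hα₀def
    have hα₀ : (e α₀ : Sym2 W) = s(a, b) := by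
      rw [hα₀def, e.apply_symm_apply]
    have hnotmem : α₀ ∉ Finset.univ.filter (fun α' : I => (e α' : Sym2 W) ∈ q.edges) := by
      simp only [Finset.mem_filter, Finset.mem_univ, true_and, hα₀]
      exact hnotedge
    rw [filter_cons_eq e h q, Finset.sum_insert hnotmem, ih hq]
    have hab : a ≠ b := h.ne
    have hkey : B (α : V) (α₀ : V) = indZ a (e α) + indZ b (e α) := by
      by_cases hαα : α = α₀
      · subst hαα
        rw [hB]
        unfold indZ
        rw [hα₀]
        simp only [Sym2.mem_mk_left, Sym2.mem_mk_right, if_pos]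
        decide
      · have hiff := he α α₀ hαα
        rw [hα₀] at hiff
        unfold indZ
        by_cases hx : a ∈ (e α : Sym2 W) <;> by_cases hz : b ∈ (e α : Sym2 W)
        · exfalso
          have : (e α : Sym2 W) = s(a, b) := (Sym2.mem_and_mem_iff hab).mp ⟨hx, hz⟩
          exact hαα (e.eq_symm_apply.mpr (Subtype.ext this))
        · rw [if_pos hx, if_neg hz, add_zero]
          exact hiff.mpr ⟨a, hx, Sym2.mem_mk_left a b⟩
        · rw [if_neg hx, if_pos hz, zero_add]
          exact hiff.mpr ⟨b, hz, Sym2.mem_mk_right a b⟩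
        · rw [if_neg hx, if_neg hz, add_zero]
          apply zmod2_eq_zero_of_ne_one
          intro h1
          obtain ⟨w, hw1, hw2⟩ := hiff.mp h1
          rw [Sym2.mem_iff] at hw2
          rcases hw2 with rfl | rfl
          · exact hx hw1
          · exact hz hw1
    rw [hkey]
    have : indZ b (e α) + indZ b (e α) = 0 := by
      unfold indZ; split_ifs <;> decide
    linear_combination (norm := abel) this

/-- exactly one edge of a nontrivial path contains its first endpoint. -/
lemma uOnce {V W : Type} [AddCommGroup V] [Module (ZMod 2) V]
    {I : Set V} [Fintype I] {T : SimpleGraph W} (e : I ≃ T.edgeSet)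
    {u v : W} (huv : u ≠ v) (p : T.Walk u v) (hp : p.IsPath) :
    (∑ α' ∈ Finset.univ.filter (fun α' : I => (e α' : Sym2 W) ∈ p.edges),
      indZ u (e α')) = 1 := by
  cases p with
  | nil => exact absurd rfl huv
  | @cons _ b _ h q =>
    have hu : u ∉ q.support := (SimpleGraph.Walk.cons_isPath_iff h q).mp hp |>.2
    set α₀ : I := e.symm ⟨s(u, b), h⟩ with hα₀def
    have hα₀ : (e α₀ : Sym2 W) = s(u, b) := by
      rw [hα₀def, e.apply_symm_apply]
    have hnodup := hp.edges_nodup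
    rw [SimpleGraph.Walk.edges_cons] at hnodup
    have hnotedge : s(u, b) ∉ q.edges := (List.nodup_cons.mp hnodup).1
    have hnotmem : α₀ ∉ Finset.univ.filter (fun α' : I => (e α' : Sym2 W) ∈ q.edges) := by
      simp only [Finset.mem_filter, Finset.mem_univ, true_and, hα₀]
      exact hnotedge
    rw [filter_cons_eq e h q, Finset.sum_insert hnotmem]
    have h1 : indZ u (e α₀) = 1 := by
      unfold indZ
      rw [hα₀, if_pos (Sym2.mem_mk_left u b)]
    have h2 : (∑ α' ∈ Finset.univ.filter (fun α' : I => (e α' : Sym2 W) ∈ q.edges),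
        indZ u (e α')) = 0 := by
      apply Finset.sum_eq_zero
      intro α' hα'
      rw [Finset.mem_filter] at hα'
      unfold indZ
      rw [if_neg]
      intro hmem
      have hspec := Sym2.other_spec hmem
      rw [← hspec] at hα'
      exact hu (q.fst_mem_support_of_mem_edges hα'.2)
    rw [h1, h2, add_zero]

/-- radical zero, `I` a basis, `G(I)` the line graph of a tree `T` via `e`,
`u ≠ v` vertices of `T`, `β, γ ∈ V` the vectors dual to `u, v`; if `p` is the path in `T`
joining `u` and `v`, then `β + γ` is the sum of the elements of `I` whose edges lie on `p`,
and consequently `B β γ = 1`. -/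
theorem stmt13 {V W : Type} [AddCommGroup V] [Module (ZMod 2) V] [FiniteDimensional (ZMod 2) V]
    (hdim : 0 < Module.finrank (ZMod 2) V)
    (B : LinearMap.BilinForm (ZMod 2) V) (hB : ∀ v, B v v = 0)
    (hrad : ∀ v : V, (∀ w, B v w = 0) → v = 0)
    (I : Set V) (hI : LinearIndependent (ZMod 2) ((↑) : I → V))
    (hIspan : Submodule.span (ZMod 2) I = ⊤)
    (T : SimpleGraph W) (hT : T.IsTree)
    (e : I ≃ T.edgeSet)
    (he : ∀ a b : I, a ≠ b →
      ((B (a : V) (b : V) = 1) ↔ ∃ u : W, u ∈ (e a : Sym2 W) ∧ u ∈ (e b : Sym2 W)))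
    (u v : W) (huv : u ≠ v) (β γ : V)
    (hβ : ∀ α : I, (B (α : V) β = 1 ↔ u ∈ (e α : Sym2 W)))
    (hγ : ∀ α : I, (B (α : V) γ = 1 ↔ v ∈ (e α : Sym2 W)))
    (p : T.Walk u v) (hp : p.IsPath) :
    (β + γ = ∑ᶠ (α : I) (_ : (e α : Sym2 W) ∈ p.edges), (α : V)) ∧ B (β : V) γ = 1 := by
  haveI : Fintype I := hI.setFinite.fintype
  set S : V := ∑ α' ∈ Finset.univ.filter (fun α' : I => (e α' : Sym2 W) ∈ p.edges),
    (α' : V) with hSdef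
  have hconv : (∑ᶠ (α : I) (_ : (e α : Sym2 W) ∈ p.edges), (α : V)) = S := by
    rw [hSdef]
    exact finsum_cond_eq_sum_of_cond_iff _ (fun {x} _ => by simp)
  have hBβ : ∀ α : I, B (α : V) β = indZ u (e α) := by
    intro α
    unfold indZ
    split_ifs with h
    · exact (hβ α).mpr h
    · exact zmod2_eq_zero_of_ne_one _ (fun h1 => h ((hβ α).mp h1))
  have hBγ : ∀ α : I, B (α : V) γ = indZ v (e α) := by
    intro α
    unfold indZ
    split_ifs with h
    · exact (hγ α).mpr h
    · exact zmod2_eq_zero_of_ne_one _ (fun h1 => h ((hγ α).mp h1))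
  have hBS : ∀ α : I, B (α : V) S = indZ u (e α) + indZ v (e α) := by
    intro α
    rw [hSdef, map_sum]
    exact pathSum B hB e he p α hp
  have hkey : ∀ α : I, B (α : V) (β + γ - S) = 0 := by
    intro α
    rw [map_sub, map_add, hBβ, hBγ, hBS, sub_self]
  have hker : ∀ x : V, B x (β + γ - S) = 0 := by
    intro x
    have hx : x ∈ Submodule.span (ZMod 2) I := by rw [hIspan]; trivial
    have hle : Submodule.span (ZMod 2) I ≤
        LinearMap.ker ((LinearMap.flip B) (β + γ - S)) :=
      Submodule.span_le.mpr fun y hy => by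
        simp only [SetLike.mem_coe, LinearMap.mem_ker, LinearMap.flip_apply]
        exact hkey ⟨y, hy⟩
    have := hle hx
    simpa [LinearMap.mem_ker, LinearMap.flip_apply] using this
  have hzero : β + γ - S = 0 := by
    apply hrad
    intro w
    rw [Bsymm B hB]
    exact hker w
  have heq : β + γ = S := sub_eq_zero.mp hzero
  constructor
  · rw [hconv]; exact heq
  · have hγeq : γ = S - β := by
      rw [← heq]; abel
    rw [hγeq, map_sub, hB, sub_zero, hSdef, map_sum]
    have hterms : ∀ α' : I, B β (α' : V) = indZ u (e α') := by
      intro α'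
      rw [Bsymm B hB]
      exact hBβ α'
    rw [Finset.sum_congr rfl (fun α' _ => hterms α')]
    exact uOnce e huv p hp
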